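/- Let ℒ be the set consisting of the empty path together with all paths in ℰ of the form U^{ℓ_1}(DU)^{k_1}U^{ℓ_2}(DU)^{k_2}⋯U^{ℓ_r}(DU)^{k_r}U^{ℓ_{r+1}}C_s, where r ≥ 0, ℓ_i ≥ 1 and k_i ≥ 1 for 1 ≤ i ≤ r, ℓ_{r+1} ≥ 0 (for r = 0 the path has the form U^ℓC_s with ℓ ≥ 1), and s ≥ 1 is such that the path ends on the x-axis (with the convention C_1 = D). Then for every path P ∈ ℰ there exists exactly one path Q ∈ ℒ with |Q| = |P| such that P and Q are DU-equivalent. In other words, ℒ is a complete set of representatives of the DU-equivalence classes of ℰ. -/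

import Mathlib

/-- Steps of a Dyck path with catastrophes: up-step `U`, down-step `D`,
and catastrophe step `C k` of size `k` (valid paths only use `k ≥ 2`). -/
inductive Step where
  | U : Step
  | D : Step
  | C : ℕ → Step
  deriving DecidableEq

/-- The vertical displacement of a step. -/
def Step.val : Step → ℤ
  | .U => 1
  | .D => -1
  | .C k => -(k : ℤ)

/-- The height (ordinate) of the path after its first `i` steps. -/
def hgt (P : List Step) (i : ℕ) : ℤ := ((P.take i).map Step.val).sum

/-- `InE P` means `P` is a Dyck path with catastrophes (a member of ℰ):
it stays at height ≥ 0, ends on the x-axis, and every catastrophe step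
`C k` has `k ≥ 2` and starts at height `k` (hence ends on the x-axis). -/
def InE (P : List Step) : Prop :=
  (∀ i, 0 ≤ hgt P i) ∧ hgt P P.length = 0 ∧
    ∀ i k, P[i]? = some (Step.C k) → 2 ≤ k ∧ hgt P i = (k : ℤ)

/-- `(UD)^k`. -/
def UDpow (k : ℕ) : List Step := (List.replicate k [Step.U, Step.D]).flatten

/-- `(DU)^k`. -/
def DUpow (k : ℕ) : List Step := (List.replicate k [Step.D, Step.U]).flatten

/-- `U^k`. -/
def Upow (k : ℕ) : List Step := List.replicate k Step.U

/-- `C_s` with the convention `C_1 = D`. -/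
def cfin (s : ℕ) : Step := if s = 1 then Step.D else Step.C s

/-- Test whether a step is a catastrophe step. -/
def isCatB : Step → Bool
  | .C _ => true
  | _ => false

/-- The number of catastrophe steps in a path. -/
def catCount (P : List Step) : ℕ := P.countP isCatB

/-- Two paths are `DU`-equivalent when the occurrences of the pattern `DU`
appear at the same positions in both paths. -/
def DUEquiv (P Q : List Step) : Prop :=
  ∀ i : ℕ, (P[i]? = some Step.D ∧ P[i + 1]? = some Step.U) ↔
    (Q[i]? = some Step.D ∧ Q[i + 1]? = some Step.U)

/-- Membership in ℒ : the empty path, together with paths of the form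
`U^{ℓ_1} (DU)^{k_1} ⋯ U^{ℓ_r} (DU)^{k_r} U^{ℓ_{r+1}} C_s` with `r ≥ 0`,
`ℓ_i ≥ 1` and `k_i ≥ 1` for `1 ≤ i ≤ r`, `ℓ_{r+1} ≥ 0` (for `r = 0` the path
has the form `U^ℓ C_s` with `ℓ ≥ 1`), and `s ≥ 1` (with the convention
`C_1 = D`). The blocks `U^{ℓ_i} (DU)^{k_i}` are encoded by a list of pairs. -/
def InL (P : List Step) : Prop :=
  P = [] ∨
  (∃ l s, 1 ≤ l ∧ 1 ≤ s ∧ P = Upow l ++ [cfin s]) ∨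
  ∃ (L : List (ℕ × ℕ)) (m s : ℕ),
    L ≠ [] ∧ (∀ t ∈ L, 1 ≤ t.1 ∧ 1 ≤ t.2) ∧ 1 ≤ s ∧
    P = (L.map (fun t => Upow t.1 ++ DUpow t.2)).flatten ++ Upow m ++ [cfin s]

-- basic hgt lemmas
lemma hgt_zero (P : List Step) : hgt P 0 = 0 := by simp [hgt]

lemma hgt_succ {P : List Step} {i : ℕ} {x : Step} (h : P[i]? = some x) :
    hgt P (i+1) = hgt P i + x.val := by
  simp [hgt, List.take_succ, h]

lemma hgt_stable {P : List Step} {i : ℕ} (h : P.length ≤ i) :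
    hgt P i = hgt P P.length := by
  simp [hgt, List.take_of_length_le h, List.take_of_length_le (le_refl P.length)]

lemma hgt_prefix {A B : List Step} {j : ℕ} (h : j ≤ A.length) :
    hgt (A ++ B) j = hgt A j := by
  simp [hgt, List.take_append_of_le_length h]

lemma cfin_val (s : ℕ) : (cfin s).val = -(s : ℤ) := by
  unfold cfin
  split
  · simp_all [Step.val]
  · simp [Step.val]

-- properties of blocks
def UorD (w : List Step) : Prop := ∀ x ∈ w, x = Step.U ∨ x = Step.D
def DfollowU (w : List Step) : Prop := ∀ i, w[i]? = some Step.D → w[i+1]? = some Step.U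

lemma Upow_length (k : ℕ) : (Upow k).length = k := by simp [Upow]
lemma DUpow_length (k : ℕ) : (DUpow k).length = 2 * k := by
  simp [DUpow]; ring

lemma DUpow_succ (k : ℕ) : DUpow (k+1) = Step.D :: Step.U :: DUpow k := by
  simp [DUpow, List.replicate_succ]

lemma UorD_Upow (k : ℕ) : UorD (Upow k) := by
  intro x hx; left; exact (List.eq_of_mem_replicate hx)

lemma UorD_DUpow (k : ℕ) : UorD (DUpow k) := by
  induction k with
  | zero => intro x hx; simp [DUpow] at hx
  | succ k ih =>
    intro x hx
    rw [DUpow_succ] at hx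
    simp only [List.mem_cons] at hx
    rcases hx with h | h | h
    · right; exact h
    · left; exact h
    · exact ih x h

lemma UorD_append {A B : List Step} (hA : UorD A) (hB : UorD B) : UorD (A ++ B) := by
  intro x hx; rcases List.mem_append.1 hx with h | h
  · exact hA x h
  · exact hB x h

lemma DfollowU_Upow (k : ℕ) : DfollowU (Upow k) := by
  intro i h
  simp only [Upow, List.getElem?_replicate] at h
  split at h <;> simp_all

lemma DfollowU_DUpow (k : ℕ) : DfollowU (DUpow k) := by
  induction k with
  | zero => intro i h; simp [DUpow] at h
  | succ k ih =>
    intro i h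
    rw [DUpow_succ] at h ⊢
    match i with
    | 0 => simp
    | 1 => simp at h
    | (j+2) => simpa using ih j (by simpa using h)

lemma DfollowU_append {A B : List Step} (hA : DfollowU A) (hB : DfollowU B) :
    DfollowU (A ++ B) := by
  intro i h
  rcases lt_or_ge i A.length with hi | hi
  · rw [List.getElem?_append_left hi] at h
    have h2 := hA i h
    have : i + 1 < A.length := by
      rcases Nat.lt_or_ge (i+1) A.length with h' | h'
      · exact h'
      · rw [List.getElem?_eq_none h'] at h2; simp at h2
    rw [List.getElem?_append_left this]; exact hA i h
  · rw [List.getElem?_append_right hi] at h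
    rw [List.getElem?_append_right (le_trans hi (Nat.le_succ i))]
    have : i + 1 - A.length = (i - A.length) + 1 := by omega
    rw [this]
    exact hB _ h

lemma UorD_blocks (L : List (ℕ × ℕ)) :
    UorD ((L.map (fun t => Upow t.1 ++ DUpow t.2)).flatten) := by
  induction L with
  | nil => intro x hx; simp at hx
  | cons t L ih =>
    simp only [List.map_cons, List.flatten_cons]
    exact UorD_append (UorD_append (UorD_Upow _) (UorD_DUpow _)) ih

lemma DfollowU_blocks (L : List (ℕ × ℕ)) :
    DfollowU ((L.map (fun t => Upow t.1 ++ DUpow t.2)).flatten) := by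
  induction L with
  | nil => intro i h; simp at h
  | cons t L ih =>
    simp only [List.map_cons, List.flatten_cons]
    exact DfollowU_append (DfollowU_append (DfollowU_Upow _) (DfollowU_DUpow _)) ih

def stripU : List Step → ℕ × List Step
  | Step.U :: w => ((stripU w).1 + 1, (stripU w).2)
  | w => (0, w)

def stripDU : List Step → ℕ × List Step
  | Step.D :: Step.U :: w => ((stripDU w).1 + 1, (stripDU w).2)
  | w => (0, w)

lemma stripU_spec : ∀ w : List Step, w = Upow (stripU w).1 ++ (stripU w).2 := by
  intro w
  induction w with
  | nil => simp [stripU, Upow]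
  | cons y w ih =>
    cases y with
    | U => simp only [stripU, Upow, List.replicate_succ, List.cons_append]
           exact congrArg _ ih
    | D => simp [stripU, Upow]
    | C k => simp [stripU, Upow]

lemma stripU_head : ∀ (w : List Step) (x : Step) (r : List Step),
    (stripU w).2 = x :: r → x ≠ Step.U := by
  intro w
  induction w with
  | nil => intro x r h; simp [stripU] at h
  | cons y w ih =>
    cases y with
    | U => intro x r h; exact ih x r (by simpa [stripU] using h)
    | D => intro x r h; simp [stripU] at h; rw [← h.1]; simp
    | C k => intro x r h; simp [stripU] at h; rw [← h.1]; simp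

lemma stripDU_spec : ∀ w : List Step, w = DUpow (stripDU w).1 ++ (stripDU w).2 := by
  intro w
  induction w using stripDU.induct with
  | case1 w ih =>
    simp only [stripDU, DUpow_succ, List.cons_append]
    exact congrArg _ (congrArg _ ih)
  | case2 w h =>
    have : stripDU w = (0, w) := by
      cases w with
      | nil => simp [stripDU]
      | cons y w' =>
        cases y with
        | U => simp [stripDU]
        | C k => simp [stripDU]
        | D =>
          cases w' with
          | nil => simp [stripDU]
          | cons z w'' =>
            cases z with
            | U => exact absurd rfl (h w'')
            | D => simp [stripDU]
            | C k => simp [stripDU]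
    rw [this]; simp [DUpow]

lemma stripDU_head : ∀ (w : List Step) (r : List Step),
    (stripDU w).2 ≠ Step.D :: Step.U :: r := by
  intro w
  induction w using stripDU.induct with
  | case1 w ih => intro r h; exact ih r (by simpa [stripDU] using h)
  | case2 w h =>
    intro r hr
    have : stripDU w = (0, w) := by
      cases w with
      | nil => simp [stripDU]
      | cons y w' =>
        cases y with
        | U => simp [stripDU]
        | C k => simp [stripDU]
        | D =>
          cases w' with
          | nil => simp [stripDU]
          | cons z w'' =>
            cases z with
            | U => exact absurd rfl (h w'')
            | D => simp [stripDU]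
            | C k => simp [stripDU]
    rw [this] at hr
    exact h r hr

lemma decomp : ∀ (N : ℕ) (w : List Step), w.length ≤ N → UorD w → DfollowU w →
    w[0]? ≠ some Step.D →
    (∃ m, w = Upow m) ∨
      ∃ (L : List (ℕ × ℕ)) (m : ℕ), L ≠ [] ∧ (∀ t ∈ L, 1 ≤ t.1 ∧ 1 ≤ t.2) ∧
        w = (List.map (fun t => Upow t.1 ++ DUpow t.2) L).flatten ++ Upow m := by
  intro N
  induction N with
  | zero =>
    intro w hw _ _ _
    left; exact ⟨0, by simpa [Upow] using List.eq_nil_of_length_eq_zero (Nat.le_zero.1 hw)⟩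
  | succ N ih =>
    intro w hw hx hD h0
    obtain ⟨a, r, hsplit, hrhead⟩ : ∃ a r, w = Upow a ++ r ∧
        ∀ x r', r = x :: r' → x ≠ Step.U :=
      ⟨(stripU w).1, (stripU w).2, stripU_spec w, fun x r' h => stripU_head w x r' h⟩
    match hrc : r with
    | [] => left; exact ⟨a, by simpa using hsplit⟩
    | x :: r1 =>
      subst hrc
      -- x = D
      have hxmem : x ∈ w := by rw [hsplit]; simp
      have hxD : x = Step.D := by
        rcases hx x hxmem with h | h
        · exact absurd h (hrhead x r1 rfl)
        · exact h
      subst hxD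
      -- a ≥ 1
      have ha : 1 ≤ a := by
        by_contra h
        have ha0 : a = 0 := by omega
        rw [hsplit, ha0] at h0
        simp [Upow] at h0
      -- r1 starts with U
      have hwa : w[a]? = some Step.D := by
        rw [hsplit, List.getElem?_append_right (by simp [Upow])]
        simp [Upow]
      have hwa1 := hD a hwa
      have hr1 : r1[0]? = some Step.U := by
        rw [hsplit, List.getElem?_append_right (by simp [Upow])] at hwa1
        simpa [Upow] using hwa1
      obtain ⟨r'', hr''⟩ : ∃ r'', r1 = Step.U :: r'' := by
        match r1, hr1 with
        | (y :: t), h => exact ⟨t, by simp at h; rw [h]⟩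
      -- strip DU block
      set r : List Step := Step.D :: r1 with hrdef
      obtain ⟨b, r2, hsplit2, hr2head⟩ : ∃ b r2, r = DUpow b ++ r2 ∧
          ∀ r', r2 ≠ Step.D :: Step.U :: r' :=
        ⟨(stripDU r).1, (stripDU r).2, stripDU_spec r, fun r' => stripDU_head r r'⟩
      have hb : 1 ≤ b := by
        by_contra h
        have hb0 : b = 0 := by omega
        rw [hb0] at hsplit2
        simp [DUpow] at hsplit2
        exact hr2head r'' (by rw [← hsplit2, hrdef, hr''])
      -- w = A ++ r2
      have hw2 : w = (Upow a ++ DUpow b) ++ r2 := by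
        rw [hsplit, hsplit2, List.append_assoc]
      have hAlen : (Upow a ++ DUpow b).length = a + 2*b := by
        simp only [List.length_append, Upow_length, DUpow_length]
      -- transfer properties to r2
      have hx2 : UorD r2 := by
        intro y hy; exact hx y (by rw [hw2]; simp [hy])
      have hget : ∀ i, w[(a+2*b) + i]? = r2[i]? := by
        intro i
        rw [hw2, List.getElem?_append_right (by omega : (Upow a ++ DUpow b).length ≤ (a+2*b)+i)]
        congr 1; omega
      have hD2 : DfollowU r2 := by
        intro i h
        have := hD ((a+2*b)+i) (by rw [hget i]; exact h)
        rw [show (a+2*b)+i+1 = (a+2*b)+(i+1) by omega, hget (i+1)] at this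
        exact this
      have h02 : r2[0]? ≠ some Step.D := by
        intro h
        have h1 := hD2 0 h
        match r2, h, h1 with
        | (y :: t), h, h1 =>
          simp at h
          match t, h1 with
          | (z :: t'), h1 =>
            simp at h1
            exact hr2head t' (by rw [h, h1])
      have hlen2 : r2.length ≤ N := by
        have : w.length = a + 2*b + r2.length := by
          rw [hw2, List.length_append, hAlen]
        omega
      rcases ih r2 hlen2 hx2 hD2 h02 with ⟨m, hm⟩ | ⟨L, m, hL, hLt, hLm⟩
      · right
        refine ⟨[(a, b)], m, by simp, by simp [ha, hb], ?_⟩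
        rw [hw2, hm]; simp [List.append_assoc]
      · right
        refine ⟨(a, b) :: L, m, by simp, ?_, ?_⟩
        · intro t ht
          rcases List.mem_cons.1 ht with h | h
          · rw [h]; exact ⟨ha, hb⟩
          · exact hLt t h
        · rw [hw2, hLm]; simp [List.append_assoc]

-- du pattern as a Boolean
def duB (P : List Step) (i : ℕ) : Bool :=
  decide (P[i]? = some Step.D ∧ P[i + 1]? = some Step.U)

lemma duB_iff {P : List Step} {i : ℕ} :
    duB P i = true ↔ (P[i]? = some Step.D ∧ P[i+1]? = some Step.U) := by
  simp [duB]

section facts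
variable {P : List Step}

lemma duB_zero (hP : InE P) : duB P 0 = false := by
  rw [Bool.eq_false_iff]
  intro h
  obtain ⟨hD, _⟩ := duB_iff.1 h
  have h1 : hgt P 1 = -1 := by rw [hgt_succ hD, hgt_zero]; simp [Step.val]
  have := hP.1 1
  omega

lemma duB_succ {i : ℕ} (h : duB P i = true) : duB P (i+1) = false := by
  obtain ⟨_, hU⟩ := duB_iff.1 h
  rw [Bool.eq_false_iff]; intro h2
  obtain ⟨hD, _⟩ := duB_iff.1 h2
  rw [hU] at hD; cases hD

lemma duB_lt (hP : InE P) {i : ℕ} (h : duB P i = true) : i + 3 ≤ P.length := by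
  obtain ⟨hD, hU⟩ := duB_iff.1 h
  have h1 : i + 1 < P.length := (List.getElem?_eq_some_iff.1 hU).1
  by_contra hc
  have h2 : i + 2 = P.length := by omega
  have h3 : hgt P (i+2) = hgt P (i+1) + 1 := by rw [hgt_succ hU]; simp [Step.val]
  have h4 := hP.1 (i+1)
  have h5 := hP.2.1
  rw [← h2] at h5
  omega

lemma len_ne_one (hP : InE P) : P.length ≠ 1 := by
  intro h1
  obtain ⟨x, hx⟩ : ∃ x, P[0]? = some x := by
    have h : 0 < P.length := by omega
    exact ⟨P[0], List.getElem?_eq_getElem h⟩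
  have h2 : hgt P 1 = x.val := by rw [hgt_succ hx, hgt_zero]; ring
  have h3 : hgt P 1 = 0 := by have := hP.2.1; rwa [h1] at this
  cases x with
  | U => simp [Step.val] at h2; omega
  | D => simp [Step.val] at h2; omega
  | C k =>
    have h4 := (hP.2.2 0 k hx).2
    rw [hgt_zero] at h4
    have h5 := (hP.2.2 0 k hx).1
    omega

def cnt (P : List Step) (j : ℕ) : ℕ := (List.range j).countP (duB P)

lemma cnt_succ (P : List Step) (j : ℕ) :
    cnt P (j+1) = cnt P j + (if duB P j then 1 else 0) := by
  rw [cnt, List.range_succ, List.countP_append]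
  simp [cnt, List.countP_cons]

lemma cnt_bound (hP : InE P) :
    ∀ j, 2 * cnt P j ≤ j ∧ (duB P j = true → 2 * cnt P j + 1 ≤ j) := by
  intro j
  induction j with
  | zero =>
    constructor
    · simp [cnt]
    · intro h; rw [duB_zero hP] at h; cases h
  | succ j ih =>
    by_cases h : duB P j = true
    · have h2 := ih.2 h
      constructor
      · rw [cnt_succ]; simp [h]; omega
      · intro h3; rw [duB_succ h] at h3; cases h3
    · have hb : duB P j = false := by simpa using h
      have h1 := ih.1
      constructor
      · rw [cnt_succ]; simp [hb]; omega
      · intro _; rw [cnt_succ]; simp [hb]; omega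

lemma cnt_top (hP : InE P) (hn : 2 ≤ P.length) :
    2 * cnt P (P.length - 1) + 2 ≤ P.length := by
  obtain ⟨m, hm⟩ : ∃ m, P.length = m + 2 := ⟨P.length - 2, by omega⟩
  have h1 : duB P m = false := by
    rw [Bool.eq_false_iff]; intro h
    have := duB_lt hP h; omega
  have h2 : cnt P (m+1) = cnt P m := by rw [cnt_succ, h1]; simp
  have h3 := (cnt_bound hP m).1
  rw [show P.length - 1 = m + 1 by omega, h2]
  omega

end facts

def mkW (P : List Step) : List Step :=
  (List.range (P.length - 1)).map (fun i => if duB P i then Step.D else Step.U)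

lemma mkW_length (P : List Step) : (mkW P).length = P.length - 1 := by simp [mkW]

lemma mkW_get {P : List Step} {i : ℕ} (h : i < P.length - 1) :
    (mkW P)[i]? = some (if duB P i then Step.D else Step.U) := by
  rw [mkW, List.getElem?_map, List.getElem?_range h]; rfl

lemma hgt_mkW (P : List Step) : ∀ j, j ≤ P.length - 1 →
    hgt (mkW P) j = (j : ℤ) - 2 * cnt P j := by
  intro j
  induction j with
  | zero => intro _; simp [hgt_zero, cnt]
  | succ j ih =>
    intro h
    have hj : j < P.length - 1 := by omega
    rw [hgt_succ (mkW_get hj), ih (by omega), cnt_succ]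
    by_cases hb : duB P j = true
    · simp [hb, Step.val]; push_cast; ring
    · have hb' : duB P j = false := by simpa using hb
      simp [hb', Step.val]; push_cast; ring

/-- ℒ is a complete set of representatives of the DU-equivalence classes of ℰ. -/
theorem L_complete_set_of_representatives_for_DUEquiv (P : List Step) (hP : InE P) :
    ∃! Q : List Step, (InE Q ∧ InL Q) ∧ Q.length = P.length ∧ DUEquiv P Q := by
  rcases Nat.eq_zero_or_pos P.length with h0 | hpos
  · -- empty path
    have hPnil : P = [] := List.eq_nil_of_length_eq_zero h0
    refine ⟨[], ⟨⟨⟨fun i => by simp [hgt], by simp [hgt], fun i k h => by simp at h⟩,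
      Or.inl rfl⟩, by simp [h0], by subst hPnil; exact fun i => Iff.rfl⟩, ?_⟩
    rintro Q' ⟨-, hlen', -⟩
    rw [h0] at hlen'
    exact List.eq_nil_of_length_eq_zero hlen'
  · -- nonempty: length ≥ 2
    have hn : 2 ≤ P.length := by
      have := len_ne_one hP; omega
    set c := cnt P (P.length - 1) with hc
    set s := P.length - 1 - 2 * c with hsdef
    have hc2 : 2 * c + 2 ≤ P.length := cnt_top hP hn
    have hs1 : 1 ≤ s := by omega
    set W := mkW P with hW
    set Q := W ++ [cfin s] with hQ
    have hWlen : W.length = P.length - 1 := mkW_length P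
    have hQlen : Q.length = P.length := by
      rw [hQ, List.length_append, hWlen]; simp; omega
    have qget1 : ∀ i, i < P.length - 1 →
        Q[i]? = some (if duB P i then Step.D else Step.U) := by
      intro i h
      rw [hQ, List.getElem?_append_left (by rw [hWlen]; omega)]
      exact mkW_get h
    have qget2 : Q[P.length - 1]? = some (cfin s) := by
      rw [hQ, List.getElem?_append_right (by rw [hWlen]), hWlen]
      simp
    have qget3 : ∀ i, P.length ≤ i → Q[i]? = none := by
      intro i h
      exact List.getElem?_eq_none (by rw [hQlen]; exact h)
    have hgtQ : ∀ j, j ≤ P.length - 1 → hgt Q j = (j : ℤ) - 2 * cnt P j := by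
      intro j hj
      rw [hQ, hgt_prefix (by rw [hWlen]; exact hj)]
      exact hgt_mkW P j hj
    have hgtQn : hgt Q P.length = 0 := by
      have h1 := hgt_succ qget2
      rw [show (P.length - 1) + 1 = P.length by omega] at h1
      rw [h1, hgtQ _ le_rfl, cfin_val]
      have : (s : ℤ) = (P.length : ℤ) - 1 - 2 * (c : ℤ) := by omega
      rw [← hc]
      omega
    -- DU equivalence
    have hDUeq : DUEquiv P Q := by
      intro i
      constructor
      · rintro ⟨hD, hU⟩
        have hb : duB P i = true := duB_iff.2 ⟨hD, hU⟩
        have h3 := duB_lt hP hb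
        have hQi : Q[i]? = some Step.D := by
          rw [qget1 i (by omega), hb]; simp
        have hQi1 : Q[i+1]? = some Step.U := by
          rw [qget1 (i+1) (by omega), duB_succ hb]; simp
        exact ⟨hQi, hQi1⟩
      · rintro ⟨hD, hU⟩
        rcases lt_trichotomy i (P.length - 1) with h | h | h
        · rw [qget1 i h] at hD
          by_cases hb : duB P i = true
          · exact duB_iff.1 hb
          · exfalso; rw [if_neg hb] at hD; cases hD
        · exfalso
          rw [qget3 (i+1) (by omega)] at hU; cases hU
        · exfalso
          rw [qget3 i (by omega)] at hD; cases hD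
    -- InE Q
    have hInE : InE Q := by
      refine ⟨?_, ?_, ?_⟩
      · intro j
        rcases le_or_gt j (P.length - 1) with h | h
        · rw [hgtQ j h]
          have := (cnt_bound hP j).1
          omega
        · have hj : Q.length ≤ j := by rw [hQlen]; omega
          rw [hgt_stable hj, hQlen, hgtQn]
      · rw [hQlen, hgtQn]
      · intro i k hik
        rcases lt_trichotomy i (P.length - 1) with h | h | h
        · rw [qget1 i h] at hik
          split at hik <;> simp at hik
        · subst h
          rw [qget2] at hik
          simp only [Option.some.injEq] at hik
          unfold cfin at hik
          by_cases hs : s = 1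
          · rw [if_pos hs] at hik; cases hik
          · rw [if_neg hs] at hik
            cases hik
            constructor
            · omega
            · rw [hgtQ _ le_rfl, ← hc]
              omega
        · rw [qget3 i (by omega)] at hik; cases hik
    -- InL Q
    have hInL : InL Q := by
      have hxW : UorD W := by
        intro x hx
        rw [hW, mkW] at hx
        simp only [List.mem_map, List.mem_range] at hx
        obtain ⟨i, -, hi⟩ := hx
        rw [← hi]
        split
        · right; rfl
        · left; rfl
      have hDW : DfollowU W := by
        intro i h
        have hi : i < P.length - 1 := by
          have := (List.getElem?_eq_some_iff.1 h).1
          rwa [hWlen] at this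
        have hb : duB P i = true := by
          rw [hW, mkW_get hi] at h
          rcases hB : duB P i with _ | _
          · rw [hB] at h; simp at h
          · rfl
        have h3 := duB_lt hP hb
        have hi1 : i + 1 < P.length - 1 := by omega
        rw [hW, mkW_get hi1, duB_succ hb]
        simp
      have h0W : W[0]? ≠ some Step.D := by
        rw [hW, mkW_get (by omega : 0 < P.length - 1), duB_zero hP]
        simp
      rcases decomp W.length W le_rfl hxW hDW h0W with ⟨m, hm⟩ | ⟨L, m, hL, hLt, hm⟩
      · right; left
        refine ⟨m, s, ?_, hs1, by rw [hQ, hm]⟩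
        rw [hm, Upow_length] at hWlen
        omega
      · right; right
        exact ⟨L, m, s, hL, hLt, hs1, by rw [hQ, hm]⟩
    refine ⟨Q, ⟨⟨hInE, hInL⟩, hQlen, hDUeq⟩, ?_⟩
    -- uniqueness
    rintro Q' ⟨⟨hE', hL'⟩, hlen', heq'⟩
    obtain ⟨W', s', hs'1, hQ'eq, hxW', hDW'⟩ : ∃ W' s', 1 ≤ s' ∧
        Q' = W' ++ [cfin s'] ∧ UorD W' ∧ DfollowU W' := by
      rcases hL' with h | ⟨l, s', hl, hs', h⟩ | ⟨L, m, s', hL, hLt, hs', h⟩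
      · exfalso; rw [h] at hlen'; simp at hlen'; omega
      · exact ⟨Upow l, s', hs', h, UorD_Upow l, DfollowU_Upow l⟩
      · exact ⟨_, s', hs', h, UorD_append (UorD_blocks L) (UorD_Upow m),
          DfollowU_append (DfollowU_blocks L) (DfollowU_Upow m)⟩
    have hW'len : W'.length = P.length - 1 := by
      rw [hQ'eq] at hlen'
      simp only [List.length_append, List.length_cons, List.length_nil] at hlen'
      omega
    have hWW : W' = W := by
      apply List.ext_getElem?
      intro i
      rcases lt_or_ge i (P.length - 1) with h | h
      · have hiW : i < W'.length := by omega
        have hx : W'[i]? = some W'[i] := List.getElem?_eq_getElem hiW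
        have hxUD := hxW' W'[i] (List.getElem_mem hiW)
        have hQ'i : Q'[i]? = W'[i]? := by
          rw [hQ'eq, List.getElem?_append_left hiW]
        rcases hxUD with hU | hD
        · have hbf : duB P i = false := by
            rw [Bool.eq_false_iff]
            intro hb
            have hdu := (heq' i).1 (duB_iff.1 hb)
            rw [hQ'i, hx, hU] at hdu
            exact absurd hdu.1 (by simp)
          rw [hx, hU, hW, mkW_get h, hbf]
          simp
        · have hW'i1 : W'[i+1]? = some Step.U := hDW' i (by rw [hx, hD])
          have hi1 : i + 1 < W'.length := (List.getElem?_eq_some_iff.1 hW'i1).1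
          have hdu : Q'[i]? = some Step.D ∧ Q'[i+1]? = some Step.U := by
            constructor
            · rw [hQ'i, hx, hD]
            · rw [hQ'eq, List.getElem?_append_left hi1]; exact hW'i1
          have hb : duB P i = true := duB_iff.2 ((heq' i).2 hdu)
          rw [hx, hD, hW, mkW_get h, hb]
          simp
      · rw [List.getElem?_eq_none (by omega), List.getElem?_eq_none (by rw [hWlen]; omega)]
    have hq'last : Q'[P.length - 1]? = some (cfin s') := by
      rw [hQ'eq, List.getElem?_append_right (by rw [hW'len]), hW'len]
      simp
    have e1 : hgt Q' P.length = 0 := by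
      have := hE'.2.1; rwa [hlen'] at this
    have e2 : hgt Q' P.length = hgt Q' (P.length - 1) + (cfin s').val := by
      have := hgt_succ hq'last
      rwa [show (P.length - 1) + 1 = P.length by omega] at this
    have e3 : hgt Q' (P.length - 1) = ((P.length - 1 : ℕ) : ℤ) - 2 * c := by
      rw [hQ'eq, hWW, hgt_prefix (by rw [hWlen]), hW, hgt_mkW P _ le_rfl, hc]
    have hss : s' = s := by
      rw [e2, e3, cfin_val] at e1
      omega
    rw [hQ'eq, hWW, hss]
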